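/- Yes-case cost bound for the SSE reduction: if the vertex set V of a graph G = (V,E) with |V| = n can be partitioned into q sets S_1,...,S_q each of size n/q such that at most an eps' fraction of edges have endpoints in different sets, then there exists a hierarchical clustering tree T with cost_G(T) <= (n/q) * |E| + eps' * n * |E|. -/

import Mathlib

/-- A rooted binary tree whose leaves are labelled by elements of `α`.
A hierarchical clustering of a vertex set is such a tree whose leaf set is the vertex set. -/
inductive HCTree (α : Type) where
  | leaf : α → HCTree α
  | node : HCTree α → HCTree α → HCTree α

namespace HCTree

variable {α : Type} [DecidableEq α]

/-- The set of leaf labels of the tree. -/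
def leaves : HCTree α → Finset α
  | leaf v => {v}
  | node l r => l.leaves ∪ r.leaves

/-- The leaf set of the minimal subtree of `T` containing both `u` and `v`
(i.e. the cluster at the lowest common ancestor of `u` and `v`). -/
def cluster : HCTree α → α → α → Finset α
  | leaf w, _, _ => {w}
  | node l r, u, v =>
    if u ∈ l.leaves ∧ v ∈ l.leaves then l.cluster u v
    else if u ∈ r.leaves ∧ v ∈ r.leaves then r.cluster u v
    else l.leaves ∪ r.leaves

/-- A tree is proper if its leaf labels are distinct, i.e. the leaf sets of the two
children of every internal node are disjoint. -/
def proper : HCTree α → Prop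
  | leaf _ => True
  | node l r => Disjoint l.leaves r.leaves ∧ l.proper ∧ r.proper

end HCTree

namespace HCTree

variable {α : Type} [DecidableEq α]

lemma cluster_subset_leaves : ∀ (T : HCTree α) (u v : α), T.cluster u v ⊆ T.leaves
  | leaf w, _, _ => by simp [cluster, leaves]
  | node l r, u, v => by
    simp only [cluster, leaves]
    split
    · exact (cluster_subset_leaves l u v).trans Finset.subset_union_left
    split
    · exact (cluster_subset_leaves r u v).trans Finset.subset_union_right
    · exact subset_rfl

def ofList (a : α) : List α → HCTree α
  | [] => .leaf a
  | b :: l => .node (.leaf a) (ofList b l)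

lemma leaves_ofList (a : α) : ∀ l : List α, (ofList a l).leaves = (a :: l).toFinset
  | [] => by simp [ofList, leaves]
  | b :: l => by
    simp [ofList, leaves, leaves_ofList b l, Finset.insert_eq, -Finset.singleton_union]

lemma proper_ofList (a : α) : ∀ l : List α, (a :: l).Nodup → (ofList a l).proper
  | [], _ => by simp [ofList, proper]
  | b :: l, h => by
    simp only [ofList, proper]
    refine ⟨?_, trivial, proper_ofList b l h.of_cons⟩
    rw [leaves_ofList]
    simp only [leaves, Finset.disjoint_singleton_left, List.mem_toFinset]
    exact h.notMem

noncomputable def ofFinset (d : α) (s : Finset α) : HCTree α :=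
  match s.toList with
  | [] => .leaf d
  | a :: l => ofList a l

lemma leaves_ofFinset (d : α) (s : Finset α) (hs : s.Nonempty) :
    (ofFinset d s).leaves = s := by
  cases hl : s.toList with
  | nil => exact absurd (Finset.toList_eq_nil.mp hl) hs.ne_empty
  | cons a l =>
    rw [ofFinset, hl, leaves_ofList, ← hl, Finset.toList_toFinset]

lemma proper_ofFinset (d : α) (s : Finset α) : (ofFinset d s).proper := by
  cases hl : s.toList with
  | nil => rw [ofFinset, hl]; trivial
  | cons a l =>
    rw [ofFinset, hl]
    exact proper_ofList a l (hl ▸ s.nodup_toList)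

def combine (t : HCTree α) : List (HCTree α) → HCTree α
  | [] => t
  | t' :: l => node t (combine t' l)

lemma mem_leaves_combine (x : α) : ∀ (l : List (HCTree α)) (t : HCTree α),
    x ∈ (combine t l).leaves ↔ ∃ t' ∈ t :: l, x ∈ t'.leaves
  | [], t => by simp [combine]
  | t'' :: l, t => by
    simp only [combine, leaves, Finset.mem_union, mem_leaves_combine x l t'']
    simp only [List.mem_cons]
    constructor
    · rintro (h | ⟨t', ht', h⟩)
      · exact ⟨t, Or.inl rfl, h⟩
      · exact ⟨t', Or.inr ht', h⟩
    · rintro ⟨t', (rfl | ht'), h⟩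
      · exact Or.inl h
      · exact Or.inr ⟨t', ht', h⟩

lemma leaves_subset_combine {t' : HCTree α} : ∀ (l : List (HCTree α)) (t : HCTree α),
    t' ∈ t :: l → t'.leaves ⊆ (combine t l).leaves := by
  intro l t ht x hx
  exact (mem_leaves_combine x l t).mpr ⟨t', ht, hx⟩

lemma proper_combine : ∀ (l : List (HCTree α)) (t : HCTree α),
    List.Pairwise (fun a b : HCTree α => Disjoint a.leaves b.leaves) (t :: l) →
    (∀ t' ∈ t :: l, t'.proper) → (combine t l).proper
  | [], t, _, hp => hp t (by simp)
  | t'' :: l, t, hpw, hp => by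
    rw [List.pairwise_cons] at hpw
    refine ⟨?_, hp t (by simp), proper_combine l t'' hpw.2 fun t' ht' => hp t' (List.mem_cons_of_mem _ ht')⟩
    rw [Finset.disjoint_left]
    intro x hx hx'
    obtain ⟨t', ht', hxt'⟩ := (mem_leaves_combine x l t'').mp hx'
    exact (Finset.disjoint_left.mp (hpw.1 t' ht')) hx hxt'

lemma cluster_combine_subset (u v : α) : ∀ (l : List (HCTree α)) (t t' : HCTree α),
    List.Pairwise (fun a b : HCTree α => Disjoint a.leaves b.leaves) (t :: l) →
    t' ∈ t :: l → u ∈ t'.leaves → v ∈ t'.leaves →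
    (combine t l).cluster u v ⊆ t'.leaves
  | [], t, t', _, ht', hu, hv => by
    rw [List.mem_singleton] at ht'
    subst ht'
    exact cluster_subset_leaves _ u v
  | t'' :: l, t, t', hpw, ht', hu, hv => by
    rw [List.pairwise_cons] at hpw
    rcases List.mem_cons.mp ht' with rfl | ht'
    · simp only [combine, cluster]
      rw [if_pos ⟨hu, hv⟩]
      exact cluster_subset_leaves _ u v
    · have hdu : u ∉ t.leaves := fun h =>
        Finset.disjoint_left.mp (hpw.1 t' ht') h hu
      have humem : u ∈ (combine t'' l).leaves := leaves_subset_combine l t'' ht' hu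
      have hvmem : v ∈ (combine t'' l).leaves := leaves_subset_combine l t'' ht' hv
      simp only [combine, cluster, leaves]
      rw [if_neg (fun h => hdu h.1), if_pos ⟨humem, hvmem⟩]
      exact cluster_combine_subset u v l t'' t' hpw.2 ht' hu hv

end HCTree

/-- Yes-case cost bound for the SSE reduction. If `V` (of size `n`)
is partitioned into `q` sets `S 1, ..., S q`, each of size `n/q`, such that at
most an `ε'` fraction of the edges cross between different sets, then there is a
hierarchical clustering tree `T` with `cost_G(T) ≤ (n/q)·|E| + ε'·n·|E|`. -/
theorem sse_yes_case_cost_bound {α : Type} [DecidableEq α]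
    (V : Finset α) (n : ℕ) (hn : n = V.card) (hpos : 0 < n)
    (E : Finset (α × α)) (hE : ∀ e ∈ E, e.1 ∈ V ∧ e.2 ∈ V)
    (q : ℕ) (hq : q ∣ n) (S : Fin q → Finset α)
    (hcard : ∀ i, (S i).card = n / q)
    (hdisj : ∀ i j, i ≠ j → Disjoint (S i) (S j))
    (hunion : Finset.univ.biUnion S = V)
    (ε' : ℝ) (hε : 0 ≤ ε')
    (hcross : ((E.filter fun e => ∀ i : Fin q, ¬(e.1 ∈ S i ∧ e.2 ∈ S i)).card : ℝ)
        ≤ ε' * E.card) :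
    ∃ T : HCTree α, T.proper ∧ T.leaves = V ∧
      (∑ e ∈ E, ((T.cluster e.1 e.2).card : ℝ))
        ≤ ((n / q : ℕ) : ℝ) * E.card + ε' * n * E.card := by
  classical
  have hq0 : 0 < q := by
    rcases Nat.eq_zero_or_pos q with h | h
    · subst h; obtain rfl : n = 0 := Nat.eq_zero_of_zero_dvd hq; omega
    · exact h
  have hnq : 0 < n / q := Nat.div_pos (Nat.le_of_dvd hpos hq) hq0
  have hSne : ∀ i, (S i).Nonempty := fun i =>
    Finset.card_pos.mp (by rw [hcard]; exact hnq)
  have hVne : V.Nonempty := Finset.card_pos.mp (by omega)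
  obtain ⟨v0, -⟩ := hVne
  set L : List (HCTree α) := (List.finRange q).map (fun i => HCTree.ofFinset v0 (S i)) with hL
  have hLne : L ≠ [] := by
    simp only [hL, ne_eq, List.map_eq_nil_iff, List.finRange_eq_nil_iff]
    omega
  obtain ⟨t, l, hTL⟩ := List.exists_cons_of_ne_nil hLne
  have hmemL : ∀ t' ∈ t :: l, ∃ i : Fin q, t' = HCTree.ofFinset v0 (S i) := by
    intro t' ht'
    rw [← hTL, hL] at ht'
    obtain ⟨i, -, hi⟩ := List.mem_map.mp ht'
    exact ⟨i, hi.symm⟩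
  have hmemL' : ∀ i : Fin q, HCTree.ofFinset v0 (S i) ∈ t :: l := by
    intro i
    rw [← hTL, hL]
    exact List.mem_map.mpr ⟨i, List.mem_finRange i, rfl⟩
  have hpw : List.Pairwise (fun a b : HCTree α => Disjoint a.leaves b.leaves) (t :: l) := by
    rw [← hTL, hL, List.pairwise_map]
    refine (List.nodup_finRange q).imp ?_
    intro i j hij
    rw [HCTree.leaves_ofFinset _ _ (hSne i), HCTree.leaves_ofFinset _ _ (hSne j)]
    exact hdisj i j hij
  refine ⟨HCTree.combine t l, ?_, ?_, ?_⟩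
  · refine HCTree.proper_combine l t hpw ?_
    intro t' ht'
    obtain ⟨i, rfl⟩ := hmemL t' ht'
    exact HCTree.proper_ofFinset v0 (S i)
  · ext x
    rw [HCTree.mem_leaves_combine, ← hunion]
    constructor
    · rintro ⟨t', ht', hx⟩
      obtain ⟨i, rfl⟩ := hmemL t' ht'
      rw [HCTree.leaves_ofFinset _ _ (hSne i)] at hx
      exact Finset.mem_biUnion.mpr ⟨i, Finset.mem_univ i, hx⟩
    · intro hx
      obtain ⟨i, -, hx⟩ := Finset.mem_biUnion.mp hx
      exact ⟨_, hmemL' i, by rwa [HCTree.leaves_ofFinset _ _ (hSne i)]⟩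
  · have hleaves : (HCTree.combine t l).leaves = V := by
      ext x
      rw [HCTree.mem_leaves_combine, ← hunion]
      constructor
      · rintro ⟨t', ht', hx⟩
        obtain ⟨i, rfl⟩ := hmemL t' ht'
        rw [HCTree.leaves_ofFinset _ _ (hSne i)] at hx
        exact Finset.mem_biUnion.mpr ⟨i, Finset.mem_univ i, hx⟩
      · intro hx
        obtain ⟨i, -, hx⟩ := Finset.mem_biUnion.mp hx
        exact ⟨_, hmemL' i, by rwa [HCTree.leaves_ofFinset _ _ (hSne i)]⟩
    set p : α × α → Prop := fun e => ∀ i : Fin q, ¬(e.1 ∈ S i ∧ e.2 ∈ S i) with hp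
    have key : ∀ e ∈ E, (((HCTree.combine t l).cluster e.1 e.2).card : ℝ)
        ≤ if p e then (n : ℝ) else ((n / q : ℕ) : ℝ) := by
      intro e he
      split
      · have := Finset.card_le_card
          ((HCTree.cluster_subset_leaves (HCTree.combine t l) e.1 e.2).trans (by rw [hleaves]))
        rw [hn]
        exact_mod_cast this
      · next h =>
        simp only [hp, not_forall, not_not] at h
        obtain ⟨i, h1, h2⟩ := h
        have hsub := HCTree.cluster_combine_subset e.1 e.2 l t (HCTree.ofFinset v0 (S i))
          hpw (hmemL' i)
          (by rwa [HCTree.leaves_ofFinset _ _ (hSne i)])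
          (by rwa [HCTree.leaves_ofFinset _ _ (hSne i)])
        rw [HCTree.leaves_ofFinset _ _ (hSne i)] at hsub
        have := Finset.card_le_card hsub
        rw [hcard i] at this
        exact_mod_cast this
    calc ∑ e ∈ E, (((HCTree.combine t l).cluster e.1 e.2).card : ℝ)
        ≤ ∑ e ∈ E, (if p e then (n : ℝ) else ((n / q : ℕ) : ℝ)) :=
          Finset.sum_le_sum key
      _ = ((E.filter p).card : ℝ) * n + ((E.filter (fun e => ¬ p e)).card : ℝ) * ((n / q : ℕ) : ℝ) := by
          rw [Finset.sum_ite, Finset.sum_const, Finset.sum_const]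
          simp [nsmul_eq_mul]
      _ ≤ ((n / q : ℕ) : ℝ) * E.card + ε' * n * E.card := by
          have h1 : ((E.filter p).card : ℝ) * n ≤ ε' * E.card * n :=
            mul_le_mul_of_nonneg_right hcross (by positivity)
          have h2 : ((E.filter (fun e => ¬ p e)).card : ℝ) * ((n / q : ℕ) : ℝ)
              ≤ (E.card : ℝ) * ((n / q : ℕ) : ℝ) := by
            apply mul_le_mul_of_nonneg_right _ (by positivity)
            exact_mod_cast Finset.card_le_card (Finset.filter_subset _ E)
          nlinarith [h1, h2]
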